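/- Let n ≥ 1, let V and E be finite-dimensional real inner product spaces, and let A(D) be a homogeneous constant-coefficient linear differential operator of order k ≥ 1 from V to E on ℝⁿ which is injectively elliptic, with symbol A(ξ) : V → E. Define for each ξ ∈ ℝⁿ \ {0} the linear map L(ξ) : E → E by L(ξ) := det(A(ξ)* ∘ A(ξ)) · (id_E − A(ξ) ∘ (A(ξ)* ∘ A(ξ))⁻¹ ∘ A(ξ)*), where A(ξ)* : E → V is the adjoint of A(ξ). Then: (i) each matrix entry of L(ξ) (with respect to any fixed basis of E) is a homogeneous polynomial of degree 2k·dim V in ξ, so that ξ ↦ L(ξ) extends to a polynomial map on all of ℝⁿ; and (ii) for every ξ ∈ ℝⁿ \ {0}, ker L(ξ) = A(ξ)[V], the range of A(ξ). -/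

import Mathlib

open MeasureTheory

/-- The symmetric tensor `ξ^{⊗k} ⊗ v`, viewed as the continuous `k`-linear map
`(h₁, …, h_k) ↦ (ξ·h₁)⋯(ξ·h_k) v`, linearly in `v`. -/
noncomputable def tensorPow {n : ℕ} (k : ℕ) {V : Type*} [NormedAddCommGroup V] [NormedSpace ℝ V]
    (ξ : EuclideanSpace ℝ (Fin n)) :
    V →ₗ[ℝ] ContinuousMultilinearMap ℝ (fun _ : Fin k => EuclideanSpace ℝ (Fin n)) V where
  toFun v := (ContinuousMultilinearMap.mkPiRing ℝ (Fin k) v).compContinuousLinearMap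
      (fun _ => innerSL ℝ ξ)
  map_add' v w := by
    ext m
    simp only [ContinuousMultilinearMap.compContinuousLinearMap_apply,
      ContinuousMultilinearMap.mkPiRing_apply, ContinuousMultilinearMap.add_apply, smul_add]
  map_smul' c v := by
    ext m
    simp only [ContinuousMultilinearMap.compContinuousLinearMap_apply,
      ContinuousMultilinearMap.mkPiRing_apply, ContinuousMultilinearMap.smul_apply,
      RingHom.id_apply]
    rw [smul_comm]

/-- The symbol `A(ξ) : V → E` of the homogeneous constant-coefficient differential operator
of order `k` given by the linear map `A` on symmetric `k`-linear maps:
`A(ξ)[v] = A[(h₁,…,h_k) ↦ (ξ·h₁)⋯(ξ·h_k) v]`. -/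
noncomputable def symbol {n k : ℕ} {V E : Type*} [NormedAddCommGroup V] [NormedSpace ℝ V]
    [NormedAddCommGroup E] [NormedSpace ℝ E]
    (A : ContinuousMultilinearMap ℝ (fun _ : Fin k => EuclideanSpace ℝ (Fin n)) V →ₗ[ℝ] E)
    (ξ : EuclideanSpace ℝ (Fin n)) : V →ₗ[ℝ] E :=
  A ∘ₗ tensorPow k ξ

/-- The symbol as a continuous linear map (all linear maps between finite-dimensional spaces
are continuous). -/
noncomputable def symbolL {n k : ℕ} {V E : Type*}
    [NormedAddCommGroup V] [InnerProductSpace ℝ V] [FiniteDimensional ℝ V]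
    [NormedAddCommGroup E] [InnerProductSpace ℝ E] [FiniteDimensional ℝ E]
    (A : ContinuousMultilinearMap ℝ (fun _ : Fin k => EuclideanSpace ℝ (Fin n)) V →ₗ[ℝ] E)
    (ξ : EuclideanSpace ℝ (Fin n)) : V →L[ℝ] E :=
  LinearMap.toContinuousLinearMap (symbol A ξ)

/-- The operator `L(ξ) = det(A(ξ)* ∘ A(ξ)) • (id_E - A(ξ) ∘ (A(ξ)* ∘ A(ξ))⁻¹ ∘ A(ξ)*)`;
here the inverse is taken via `Ring.inverse`, which is the genuine inverse whenever
`A(ξ)* ∘ A(ξ)` is invertible (as guaranteed by injective ellipticity for `ξ ≠ 0`). -/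
noncomputable def cocSymbol {n k : ℕ} {V E : Type*}
    [NormedAddCommGroup V] [InnerProductSpace ℝ V] [FiniteDimensional ℝ V]
    [NormedAddCommGroup E] [InnerProductSpace ℝ E] [FiniteDimensional ℝ E]
    (A : ContinuousMultilinearMap ℝ (fun _ : Fin k => EuclideanSpace ℝ (Fin n)) V →ₗ[ℝ] E)
    (ξ : EuclideanSpace ℝ (Fin n)) : E →L[ℝ] E :=
  LinearMap.det (((ContinuousLinearMap.adjoint (symbolL A ξ)).comp (symbolL A ξ)
      : V →L[ℝ] V) : V →ₗ[ℝ] V) •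
    (ContinuousLinearMap.id ℝ E -
      (symbolL A ξ).comp
        ((Ring.inverse ((ContinuousLinearMap.adjoint (symbolL A ξ)).comp (symbolL A ξ))).comp
          (ContinuousLinearMap.adjoint (symbolL A ξ))))


open Matrix in
lemma det_isHomogeneous {ι : Type*} [DecidableEq ι] [Fintype ι] {σ : Type*}
    (Q : Matrix ι ι (MvPolynomial σ ℝ)) (d : ι → ℕ)
    (h : ∀ i j, (Q i j).IsHomogeneous (d i)) :
    Q.det.IsHomogeneous (∑ i, d i) := by
  rw [Matrix.det_apply]
  apply MvPolynomial.IsHomogeneous.sum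
  intro p _
  have hp : (∏ i, Q (p i) i).IsHomogeneous (∑ i, d i) := by
    rw [← Equiv.sum_comp p d]
    exact MvPolynomial.IsHomogeneous.prod _ _ _ (fun i _ => h (p i) i)
  rcases Int.units_eq_one_or (Equiv.Perm.sign p) with hs | hs <;> rw [hs]
  · simpa using hp
  · simpa [Units.smul_def] using hp.neg

lemma adjugate_isHomogeneous {ι : Type*} [DecidableEq ι] [Fintype ι] {σ : Type*}
    (Q : Matrix ι ι (MvPolynomial σ ℝ)) (m : ℕ)
    (h : ∀ i j, (Q i j).IsHomogeneous m) (i j : ι) :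
    (Q.adjugate i j).IsHomogeneous ((Fintype.card ι - 1) * m) := by
  rw [Matrix.adjugate_apply]
  have hd := det_isHomogeneous (Q.updateRow j (Pi.single i 1))
      (fun i' => if i' = j then 0 else m) ?_
  · convert hd using 1
    rw [← Finset.add_sum_erase _ _ (Finset.mem_univ j)]
    rw [Finset.sum_congr rfl (fun x hx => if_neg (Finset.mem_erase.mp hx).1),
      Finset.sum_const, Finset.card_erase_of_mem (Finset.mem_univ j), Finset.card_univ,
      smul_eq_mul]
    simp
  · intro i' l
    show ((Q.updateRow j (Pi.single i 1)) i' l).IsHomogeneous (if i' = j then 0 else m)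
    by_cases hij : i' = j
    · rw [if_pos hij, hij, Matrix.updateRow_self]
      rcases eq_or_ne l i with rfl | hl
      · simpa [Pi.single_apply] using MvPolynomial.isHomogeneous_one _ _
      · simp [Pi.single_apply, hl, MvPolynomial.isHomogeneous_zero]
    · rw [if_neg hij, Matrix.updateRow_ne hij]
      exact h i' l

/-- elementary multilinear map `m ↦ (∏ l, m l (f l)) • v`. -/
noncomputable def elemCM {n : ℕ} (k : ℕ) {V : Type*} [NormedAddCommGroup V] [NormedSpace ℝ V]
    (f : Fin k → Fin n) (v : V) :
    ContinuousMultilinearMap ℝ (fun _ : Fin k => EuclideanSpace ℝ (Fin n)) V :=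
  (ContinuousMultilinearMap.mkPiRing ℝ (Fin k) v).compContinuousLinearMap
    (fun l => innerSL ℝ (EuclideanSpace.single (f l) (1:ℝ)))

lemma tensorPow_eq_sum {n k : ℕ} {V : Type*} [NormedAddCommGroup V] [NormedSpace ℝ V]
    (ξ : EuclideanSpace ℝ (Fin n)) (v : V) :
    tensorPow k ξ v = ∑ f : Fin k → Fin n, (∏ l, ξ (f l)) • elemCM k f v := by
  ext m
  simp only [tensorPow, elemCM, LinearMap.coe_mk, AddHom.coe_mk,
    ContinuousMultilinearMap.compContinuousLinearMap_apply,
    ContinuousMultilinearMap.mkPiRing_apply, ContinuousMultilinearMap.sum_apply,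
    ContinuousMultilinearMap.smul_apply, innerSL_apply_apply, EuclideanSpace.inner_single_left,
    map_one, one_mul]
  have hin : ∀ l, (inner ℝ ξ (m l) : ℝ) = ∑ t, ξ t * m l t := by
    intro l
    rw [PiLp.inner_apply]
    simp [RCLike.inner_apply, mul_comm]
  simp only [hin]
  rw [show (∏ l, ∑ t, ξ t * m l t) = ∑ f : Fin k → Fin n, ∏ l, ξ (f l) * m l (f l) by
    rw [Finset.prod_univ_sum]; simp [Fintype.piFinset_univ]]
  rw [Finset.sum_smul]
  refine Finset.sum_congr rfl fun f _ => ?_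
  rw [Finset.prod_mul_distrib, mul_smul]

lemma symbol_eq_sum {n k : ℕ} {V E : Type*} [NormedAddCommGroup V] [NormedSpace ℝ V]
    [NormedAddCommGroup E] [NormedSpace ℝ E]
    (A : ContinuousMultilinearMap ℝ (fun _ : Fin k => EuclideanSpace ℝ (Fin n)) V →ₗ[ℝ] E)
    (ξ : EuclideanSpace ℝ (Fin n)) (v : V) :
    symbol A ξ v = ∑ f : Fin k → Fin n, (∏ l, ξ (f l)) • A (elemCM k f v) := by
  show A (tensorPow k ξ v) = _
  rw [tensorPow_eq_sum, map_sum]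
  simp

noncomputable def symbolPolyMat {n k : ℕ} {V E : Type*}
    [NormedAddCommGroup V] [InnerProductSpace ℝ V] [FiniteDimensional ℝ V]
    [NormedAddCommGroup E] [InnerProductSpace ℝ E] [FiniteDimensional ℝ E]
    (A : ContinuousMultilinearMap ℝ (fun _ : Fin k => EuclideanSpace ℝ (Fin n)) V →ₗ[ℝ] E)
    {ιE ιV : Type*} [Fintype ιE] [Fintype ιV] (c : OrthonormalBasis ιE ℝ E)
    (d : OrthonormalBasis ιV ℝ V) :
    Matrix ιE ιV (MvPolynomial (Fin n) ℝ) :=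
  fun i j => ∑ f : Fin k → Fin n,
    MvPolynomial.C (c.repr (A (elemCM k f (d j))) i) * ∏ l, MvPolynomial.X (f l)

lemma symbolPolyMat_isHomogeneous {n k : ℕ} {V E : Type*}
    [NormedAddCommGroup V] [InnerProductSpace ℝ V] [FiniteDimensional ℝ V]
    [NormedAddCommGroup E] [InnerProductSpace ℝ E] [FiniteDimensional ℝ E]
    (A : ContinuousMultilinearMap ℝ (fun _ : Fin k => EuclideanSpace ℝ (Fin n)) V →ₗ[ℝ] E)
    {ιE ιV : Type*} [Fintype ιE] [Fintype ιV] (c : OrthonormalBasis ιE ℝ E)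
    (d : OrthonormalBasis ιV ℝ V) (i : ιE) (j : ιV) : (symbolPolyMat A c d i j).IsHomogeneous k := by
  apply MvPolynomial.IsHomogeneous.sum
  intro f _
  apply MvPolynomial.IsHomogeneous.C_mul
  have := MvPolynomial.IsHomogeneous.prod Finset.univ
    (fun l => (MvPolynomial.X (f l) : MvPolynomial (Fin n) ℝ)) (fun _ => 1)
    (fun l _ => MvPolynomial.isHomogeneous_X _ _)
  simpa using this

lemma symbolPolyMat_eval {n k : ℕ} {V E : Type*}
    [NormedAddCommGroup V] [InnerProductSpace ℝ V] [FiniteDimensional ℝ V]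
    [NormedAddCommGroup E] [InnerProductSpace ℝ E] [FiniteDimensional ℝ E]
    (A : ContinuousMultilinearMap ℝ (fun _ : Fin k => EuclideanSpace ℝ (Fin n)) V →ₗ[ℝ] E)
    {ιE ιV : Type*} [Fintype ιE] [Fintype ιV] [DecidableEq ιV]
    (c : OrthonormalBasis ιE ℝ E) (d : OrthonormalBasis ιV ℝ V)
    (ξ : EuclideanSpace ℝ (Fin n)) :
    LinearMap.toMatrix d.toBasis c.toBasis (symbol A ξ)
      = (symbolPolyMat A c d).map (MvPolynomial.eval (fun t => ξ t)) := by
  ext i j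
  rw [LinearMap.toMatrix_apply, Matrix.map_apply, OrthonormalBasis.coe_toBasis,
    symbol_eq_sum, symbolPolyMat]
  have h1 : c.repr (∑ f : Fin k → Fin n, (∏ l, ξ (f l)) • A (elemCM k f (d j)))
      = ∑ f : Fin k → Fin n, (∏ l, ξ (f l)) • c.repr (A (elemCM k f (d j))) := by
    rw [map_sum c.repr]
    exact Finset.sum_congr rfl fun f _ => map_smul c.repr _ _
  have h2 : MvPolynomial.eval (fun t => ξ t)
        (∑ f : Fin k → Fin n,
          MvPolynomial.C (c.repr (A (elemCM k f (d j))) i) * ∏ l, MvPolynomial.X (f l))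
      = ∑ f : Fin k → Fin n, c.repr (A (elemCM k f (d j))) i * ∏ l, ξ (f l) := by
    rw [map_sum (MvPolynomial.eval fun t => ξ t)]
    refine Finset.sum_congr rfl fun f _ => ?_
    rw [MvPolynomial.eval_mul, MvPolynomial.eval_C, map_prod]
    simp
  rw [OrthonormalBasis.coe_toBasis_repr_apply, h1, h2, WithLp.ofLp_sum, Finset.sum_apply]
  exact Finset.sum_congr rfl fun f _ => mul_comm _ _

lemma adjoint_comp_ker {V E : Type*}
    [NormedAddCommGroup V] [InnerProductSpace ℝ V] [FiniteDimensional ℝ V]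
    [NormedAddCommGroup E] [InnerProductSpace ℝ E] [FiniteDimensional ℝ E]
    (S : V →L[ℝ] E) (hker : LinearMap.ker (S : V →ₗ[ℝ] E) = ⊥) :
    LinearMap.ker ((ContinuousLinearMap.adjoint S ∘L S : V →L[ℝ] V) : V →ₗ[ℝ] V) = ⊥ := by
  rw [LinearMap.ker_eq_bot']
  intro v hv
  have hv' : ContinuousLinearMap.adjoint S (S v) = 0 := hv
  have h2 : (inner ℝ (S v) (S v) : ℝ) = 0 := by
    rw [← ContinuousLinearMap.adjoint_inner_left, hv', inner_zero_left]
  have h3 : S v = 0 := by rwa [inner_self_eq_zero] at h2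
  have h4 : v ∈ LinearMap.ker (S : V →ₗ[ℝ] E) := h3
  rwa [hker, Submodule.mem_bot] at h4

lemma isUnit_adjoint_comp {V E : Type*}
    [NormedAddCommGroup V] [InnerProductSpace ℝ V] [FiniteDimensional ℝ V]
    [NormedAddCommGroup E] [InnerProductSpace ℝ E] [FiniteDimensional ℝ E]
    (S : V →L[ℝ] E) (hker : LinearMap.ker (S : V →ₗ[ℝ] E) = ⊥) :
    IsUnit (ContinuousLinearMap.adjoint S ∘L S) := by
  obtain ⟨u, hu⟩ := (LinearMap.isUnit_iff_ker_eq_bot _).2 (adjoint_comp_ker S hker)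
  refine isUnit_iff_exists.2 ⟨LinearMap.toContinuousLinearMap (↑u⁻¹ : V →ₗ[ℝ] V), ?_, ?_⟩
  · ext x
    rw [ContinuousLinearMap.mul_apply, ContinuousLinearMap.one_apply,
      LinearMap.coe_toContinuousLinearMap']
    have h4 : (ContinuousLinearMap.adjoint S ∘L S) ((↑u⁻¹ : V →ₗ[ℝ] V) x)
        = (↑u : V →ₗ[ℝ] V) ((↑u⁻¹ : V →ₗ[ℝ] V) x) := by rw [hu]; rfl
    rw [h4, ← Module.End.mul_apply, u.mul_inv, Module.End.one_apply]
  · ext x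
    rw [ContinuousLinearMap.mul_apply, ContinuousLinearMap.one_apply,
      LinearMap.coe_toContinuousLinearMap']
    have h4 : (ContinuousLinearMap.adjoint S ∘L S) x = (↑u : V →ₗ[ℝ] V) x := by rw [hu]; rfl
    rw [h4, ← Module.End.mul_apply, u.inv_mul, Module.End.one_apply]
open Matrix

noncomputable def cocPolyMat {n k : ℕ} {V E : Type*}
    [NormedAddCommGroup V] [InnerProductSpace ℝ V] [FiniteDimensional ℝ V]
    [NormedAddCommGroup E] [InnerProductSpace ℝ E] [FiniteDimensional ℝ E]
    (A : ContinuousMultilinearMap ℝ (fun _ : Fin k => EuclideanSpace ℝ (Fin n)) V →ₗ[ℝ] E)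
    {ιE ιV : Type*} [Fintype ιE] [Fintype ιV] [DecidableEq ιE] [DecidableEq ιV]
    (c : OrthonormalBasis ιE ℝ E) (d : OrthonormalBasis ιV ℝ V) :
    Matrix ιE ιE (MvPolynomial (Fin n) ℝ) :=
  ((symbolPolyMat A c d)ᵀ * symbolPolyMat A c d).det • 1
    - symbolPolyMat A c d * ((symbolPolyMat A c d)ᵀ * symbolPolyMat A c d).adjugate
        * (symbolPolyMat A c d)ᵀ

lemma cocPolyMat_isHomogeneous {n k : ℕ} {V E : Type*}
    [NormedAddCommGroup V] [InnerProductSpace ℝ V] [FiniteDimensional ℝ V]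
    [NormedAddCommGroup E] [InnerProductSpace ℝ E] [FiniteDimensional ℝ E]
    (A : ContinuousMultilinearMap ℝ (fun _ : Fin k => EuclideanSpace ℝ (Fin n)) V →ₗ[ℝ] E)
    {ιE ιV : Type*} [Fintype ιE] [Fintype ιV] [DecidableEq ιE] [DecidableEq ιV]
    (c : OrthonormalBasis ιE ℝ E) (d : OrthonormalBasis ιV ℝ V) (i j : ιE) :
    (cocPolyMat A c d i j).IsHomogeneous (2 * k * Fintype.card ιV) := by
  set M := symbolPolyMat A c d with hM
  have hMh : ∀ i j, (M i j).IsHomogeneous k := fun i j => symbolPolyMat_isHomogeneous A c d i j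
  have hBh : ∀ i j, ((Mᵀ * M) i j).IsHomogeneous (2 * k) := by
    intro i j
    rw [Matrix.mul_apply]
    apply MvPolynomial.IsHomogeneous.sum
    intro p _
    rw [Matrix.transpose_apply, two_mul]
    exact (hMh p i).mul (hMh p j)
  have hdet : ((Mᵀ * M).det).IsHomogeneous (2 * k * Fintype.card ιV) := by
    have := det_isHomogeneous (Mᵀ * M) (fun _ => 2 * k) (fun i j => hBh i j)
    rwa [Finset.sum_const, Finset.card_univ, smul_eq_mul, mul_comm] at this
  have hadj : ∀ p q, (((Mᵀ * M).adjugate) p q).IsHomogeneous ((Fintype.card ιV - 1) * (2 * k)) :=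
    fun p q => adjugate_isHomogeneous (Mᵀ * M) (2 * k) (fun i j => hBh i j) p q
  rw [cocPolyMat, ← hM, Matrix.sub_apply]
  apply MvPolynomial.IsHomogeneous.sub
  · rw [Matrix.smul_apply, Matrix.one_apply, smul_eq_mul]
    split_ifs with h
    · rwa [mul_one]
    · rw [mul_zero]; exact MvPolynomial.isHomogeneous_zero _ _ _
  · rw [Matrix.mul_apply]
    apply MvPolynomial.IsHomogeneous.sum
    intro q _
    rw [Matrix.mul_apply, Finset.sum_mul]
    apply MvPolynomial.IsHomogeneous.sum
    intro p _
    have hc : 0 < Fintype.card ιV := Fintype.card_pos_iff.2 ⟨p⟩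
    have harith : k + (Fintype.card ιV - 1) * (2 * k) + k = 2 * k * Fintype.card ιV := by
      have h2 : (Fintype.card ιV - 1) * (2 * k) = Fintype.card ιV * (2 * k) - 1 * (2 * k) :=
        Nat.sub_mul _ _ _
      have h3 : 1 * (2 * k) ≤ Fintype.card ιV * (2 * k) := Nat.mul_le_mul_right _ hc
      have h4 : Fintype.card ιV * (2 * k) = 2 * k * Fintype.card ιV := Nat.mul_comm _ _
      omega
    rw [Matrix.transpose_apply, ← harith]
    exact ((hMh i p).mul (hadj p q)).mul (hMh j q)

lemma cocPolyMat_eval {n k : ℕ} {V E : Type*}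
    [NormedAddCommGroup V] [InnerProductSpace ℝ V] [FiniteDimensional ℝ V]
    [NormedAddCommGroup E] [InnerProductSpace ℝ E] [FiniteDimensional ℝ E]
    (A : ContinuousMultilinearMap ℝ (fun _ : Fin k => EuclideanSpace ℝ (Fin n)) V →ₗ[ℝ] E)
    {ιE ιV : Type*} [Fintype ιE] [Fintype ιV] [DecidableEq ιE] [DecidableEq ιV]
    (c : OrthonormalBasis ιE ℝ E) (d : OrthonormalBasis ιV ℝ V)
    (ξ : EuclideanSpace ℝ (Fin n)) (hξ : LinearMap.ker (symbol A ξ) = ⊥) :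
    LinearMap.toMatrix c.toBasis c.toBasis ((cocSymbol A ξ : E →L[ℝ] E) : E →ₗ[ℝ] E)
      = (cocPolyMat A c d).map (MvPolynomial.eval fun t => ξ t) := by
  classical
  set Mp := symbolPolyMat A c d with hMp
  set T : Matrix ιE ιV ℝ := Mp.map (MvPolynomial.eval fun t => ξ t) with hT
  have hT' : LinearMap.toMatrix d.toBasis c.toBasis (symbol A ξ) = T :=
    symbolPolyMat_eval A c d ξ
  set S := symbolL A ξ with hS
  have hScoe : (S : V →ₗ[ℝ] E) = symbol A ξ := LinearMap.coe_toContinuousLinearMap _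
  have hadjcoe : ((ContinuousLinearMap.adjoint S : E →L[ℝ] V) : E →ₗ[ℝ] V)
      = LinearMap.adjoint (symbol A ξ) := by
    rw [LinearMap.adjoint_eq_toCLM_adjoint]
    rfl
  have hadjT : LinearMap.toMatrix c.toBasis d.toBasis
      ((ContinuousLinearMap.adjoint S : E →L[ℝ] V) : E →ₗ[ℝ] V) = Tᵀ := by
    rw [hadjcoe, LinearMap.toMatrix_adjoint, hT']
    exact Matrix.conjTranspose_eq_transpose_of_trivial _
  set B := ContinuousLinearMap.adjoint S ∘L S with hB
  have hmatB : LinearMap.toMatrix d.toBasis d.toBasis ((B : V →L[ℝ] V) : V →ₗ[ℝ] V)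
      = Tᵀ * T := by
    rw [hB, ContinuousLinearMap.toLinearMap_comp,
      LinearMap.toMatrix_comp d.toBasis c.toBasis d.toBasis, hadjT, hScoe, hT']
  have hBunit : IsUnit B := isUnit_adjoint_comp S (by rw [hScoe]; exact hξ)
  set W := LinearMap.toMatrix d.toBasis d.toBasis
    ((Ring.inverse B : V →L[ℝ] V) : V →ₗ[ℝ] V) with hW
  have hmulW : (Tᵀ * T) * W = 1 := by
    have h1 : B * Ring.inverse B = 1 := Ring.mul_inverse_cancel _ hBunit
    have h2 : ((B : V →L[ℝ] V) : V →ₗ[ℝ] V) ∘ₗ ((Ring.inverse B : V →L[ℝ] V) : V →ₗ[ℝ] V)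
        = LinearMap.id := by
      rw [← ContinuousLinearMap.toLinearMap_comp, ← ContinuousLinearMap.mul_def, h1]
      rfl
    rw [← hmatB, hW, ← LinearMap.toMatrix_comp d.toBasis d.toBasis d.toBasis, h2,
      LinearMap.toMatrix_id]
  have hdetB : LinearMap.det ((B : V →L[ℝ] V) : V →ₗ[ℝ] V) = (Tᵀ * T).det := by
    rw [← LinearMap.det_toMatrix d.toBasis, hmatB]
  have hadjW : (Tᵀ * T).adjugate = (Tᵀ * T).det • W := by
    calc (Tᵀ * T).adjugate = (Tᵀ * T).adjugate * ((Tᵀ * T) * W) := by rw [hmulW, mul_one]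
    _ = ((Tᵀ * T).adjugate * (Tᵀ * T)) * W := by rw [mul_assoc]
    _ = ((Tᵀ * T).det • (1 : Matrix ιV ιV ℝ)) * W := by rw [Matrix.adjugate_mul]
    _ = (Tᵀ * T).det • W := by rw [Matrix.smul_mul, one_mul]
  -- left-hand side
  have hLHS : LinearMap.toMatrix c.toBasis c.toBasis ((cocSymbol A ξ : E →L[ℝ] E) : E →ₗ[ℝ] E)
      = LinearMap.det ((B : V →L[ℝ] V) : V →ₗ[ℝ] V) • ((1 : Matrix ιE ιE ℝ) - T * (W * Tᵀ)) := by
    rw [cocSymbol]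
    rw [ContinuousLinearMap.coe_smul, _root_.map_smul]
    congr 1
    rw [ContinuousLinearMap.coe_sub, map_sub]
    congr 1
    · rw [ContinuousLinearMap.coe_id, LinearMap.toMatrix_id]
    · rw [ContinuousLinearMap.toLinearMap_comp, LinearMap.toMatrix_comp c.toBasis d.toBasis c.toBasis,
        hScoe, hT', ContinuousLinearMap.toLinearMap_comp,
        LinearMap.toMatrix_comp c.toBasis d.toBasis d.toBasis, hadjT]
  rw [hLHS]
  -- right-hand side
  have hmapdet : MvPolynomial.eval (fun t => ξ t) (Mpᵀ * Mp).det = (Tᵀ * T).det := by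
    rw [RingHom.map_det, RingHom.mapMatrix_apply]
    congr 1
    rw [Matrix.map_mul, Matrix.transpose_map, hT]
  have hmapadj : ((Mpᵀ * Mp).adjugate).map (MvPolynomial.eval fun t => ξ t)
      = (Tᵀ * T).adjugate := by
    rw [← RingHom.mapMatrix_apply, RingHom.map_adjugate, RingHom.mapMatrix_apply]
    congr 1
    rw [Matrix.map_mul, Matrix.transpose_map, hT]
  have hRHS : (cocPolyMat A c d).map (MvPolynomial.eval fun t => ξ t)
      = (Tᵀ * T).det • (1 : Matrix ιE ιE ℝ) - T * (Tᵀ * T).adjugate * Tᵀ := by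
    rw [cocPolyMat, ← hMp]
    have : ((Mpᵀ * Mp).det • (1 : Matrix ιE ιE (MvPolynomial (Fin n) ℝ))
          - Mp * (Mpᵀ * Mp).adjugate * Mpᵀ).map (MvPolynomial.eval fun t => ξ t)
        = (MvPolynomial.eval fun t => ξ t).mapMatrix
            ((Mpᵀ * Mp).det • 1 - Mp * (Mpᵀ * Mp).adjugate * Mpᵀ) := rfl
    rw [this, map_sub]
    congr 1
    · ext i j
      simp only [RingHom.mapMatrix_apply, Matrix.map_apply, Matrix.smul_apply,
        Matrix.one_apply, smul_eq_mul, mul_ite, mul_one, mul_zero, apply_ite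
          (MvPolynomial.eval fun t => ξ t), map_zero, hmapdet]
    · rw [RingHom.mapMatrix_apply, Matrix.map_mul, Matrix.map_mul, hmapadj,
        Matrix.transpose_map, ← hT]
  rw [hRHS, hadjW, hdetB, Matrix.mul_smul, Matrix.smul_mul, smul_sub, ← Matrix.mul_assoc]

lemma cocSymbol_ker {n k : ℕ} {V E : Type*}
    [NormedAddCommGroup V] [InnerProductSpace ℝ V] [FiniteDimensional ℝ V]
    [NormedAddCommGroup E] [InnerProductSpace ℝ E] [FiniteDimensional ℝ E]
    (A : ContinuousMultilinearMap ℝ (fun _ : Fin k => EuclideanSpace ℝ (Fin n)) V →ₗ[ℝ] E)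
    (ξ : EuclideanSpace ℝ (Fin n)) (hξ : LinearMap.ker (symbol A ξ) = ⊥) :
    LinearMap.ker ((cocSymbol A ξ : E →L[ℝ] E) : E →ₗ[ℝ] E)
      = LinearMap.range (symbol A ξ) := by
  set S := symbolL A ξ with hS
  have hScoe : (S : V →ₗ[ℝ] E) = symbol A ξ := LinearMap.coe_toContinuousLinearMap _
  set B := ContinuousLinearMap.adjoint S ∘L S with hB
  have hBunit : IsUnit B := isUnit_adjoint_comp S (by rw [hScoe]; exact hξ)
  have hdet_ne : LinearMap.det ((B : V →L[ℝ] V) : V →ₗ[ℝ] V) ≠ 0 := by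
    have h1 : IsUnit ((B : V →L[ℝ] V) : V →ₗ[ℝ] V) :=
      (LinearMap.isUnit_iff_ker_eq_bot _).2 (adjoint_comp_ker S (by rw [hScoe]; exact hξ))
    exact isUnit_iff_ne_zero.1 (LinearMap.isUnit_det _ h1)
  have hcoe : ((cocSymbol A ξ : E →L[ℝ] E) : E →ₗ[ℝ] E)
      = LinearMap.det ((B : V →L[ℝ] V) : V →ₗ[ℝ] V) •
        ((ContinuousLinearMap.id ℝ E -
          S.comp ((Ring.inverse B).comp (ContinuousLinearMap.adjoint S)) : E →L[ℝ] E)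
            : E →ₗ[ℝ] E) := by
    rw [cocSymbol, ContinuousLinearMap.coe_smul]
  rw [hcoe, LinearMap.ker_smul _ _ hdet_ne]
  apply le_antisymm
  · intro e he
    rw [LinearMap.mem_ker] at he
    have he' : e - S ((Ring.inverse B) (ContinuousLinearMap.adjoint S e)) = 0 := he
    have he2 : e = S ((Ring.inverse B) (ContinuousLinearMap.adjoint S e)) :=
      sub_eq_zero.1 he'
    exact ⟨(Ring.inverse B) (ContinuousLinearMap.adjoint S e), by rw [← hScoe]; exact he2.symm⟩
  · rintro e ⟨v, rfl⟩
    rw [LinearMap.mem_ker]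
    show symbol A ξ v - S ((Ring.inverse B) (ContinuousLinearMap.adjoint S (symbol A ξ v))) = 0
    have h3 : ContinuousLinearMap.adjoint S (symbol A ξ v) = B v := by
      rw [hB]; rw [← hScoe]; rfl
    have h4 : (Ring.inverse B) (B v) = v := by
      have h5 : Ring.inverse B * B = 1 := Ring.inverse_mul_cancel _ hBunit
      calc (Ring.inverse B) (B v) = (Ring.inverse B * B) v := rfl
      _ = v := by rw [h5]; rfl
    rw [h3, h4]
    exact sub_self (S v)

/-- For an injectively elliptic operator `A(D)`, the map `L(ξ)` (i) has matrix entries, in any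
basis of `E`, given by homogeneous polynomials of degree `2 k dim V` in `ξ`, and
(ii) satisfies `ker L(ξ) = range A(ξ)` for every `ξ ≠ 0`. -/
theorem stmt5 {n k : ℕ} (hn : 1 ≤ n) (hk : 1 ≤ k)
    {V E : Type*} [NormedAddCommGroup V] [InnerProductSpace ℝ V] [FiniteDimensional ℝ V]
    [NormedAddCommGroup E] [InnerProductSpace ℝ E] [FiniteDimensional ℝ E]
    (A : ContinuousMultilinearMap ℝ (fun _ : Fin k => EuclideanSpace ℝ (Fin n)) V →ₗ[ℝ] E)
    (hA : ∀ ξ : EuclideanSpace ℝ (Fin n), ξ ≠ 0 → LinearMap.ker (symbol A ξ) = ⊥) :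
    (∀ (ι : Type) [Fintype ι] [DecidableEq ι] (b : Module.Basis ι ℝ E) (i j : ι),
      ∃ P : MvPolynomial (Fin n) ℝ, P.IsHomogeneous (2 * k * Module.finrank ℝ V) ∧
        ∀ ξ : EuclideanSpace ℝ (Fin n), ξ ≠ 0 →
          LinearMap.toMatrix b b ((cocSymbol A ξ : E →L[ℝ] E) : E →ₗ[ℝ] E) i j
            = MvPolynomial.eval (fun t => ξ t) P)
    ∧ (∀ ξ : EuclideanSpace ℝ (Fin n), ξ ≠ 0 →
        LinearMap.ker ((cocSymbol A ξ : E →L[ℝ] E) : E →ₗ[ℝ] E)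
          = LinearMap.range (symbol A ξ)) := by
  classical
  constructor
  · intro ι _ _ b i j
    set c := stdOrthonormalBasis ℝ E with hc
    set d := stdOrthonormalBasis ℝ V with hd
    set N := cocPolyMat A c d with hN
    set X := LinearMap.toMatrix c.toBasis b (LinearMap.id (R := ℝ) (M := E)) with hX
    set Y := LinearMap.toMatrix b c.toBasis (LinearMap.id (R := ℝ) (M := E)) with hY
    refine ⟨∑ p, ∑ q, MvPolynomial.C (X i p) * (N p q * MvPolynomial.C (Y q j)), ?_, ?_⟩
    · apply MvPolynomial.IsHomogeneous.sum
      intro p _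
      apply MvPolynomial.IsHomogeneous.sum
      intro q _
      have h1 := (MvPolynomial.isHomogeneous_C _ (X i p)).mul
        ((cocPolyMat_isHomogeneous A c d p q).mul (MvPolynomial.isHomogeneous_C _ (Y q j)))
      simpa [Fintype.card_fin] using h1
    · intro ξ hξ
      have hid : ((cocSymbol A ξ : E →L[ℝ] E) : E →ₗ[ℝ] E)
          = LinearMap.id ∘ₗ (((cocSymbol A ξ : E →L[ℝ] E) : E →ₗ[ℝ] E) ∘ₗ LinearMap.id) := by
        simp
      have hmat : LinearMap.toMatrix b b ((cocSymbol A ξ : E →L[ℝ] E) : E →ₗ[ℝ] E)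
          = X * (LinearMap.toMatrix c.toBasis c.toBasis
              ((cocSymbol A ξ : E →L[ℝ] E) : E →ₗ[ℝ] E) * Y) := by
        conv_lhs => rw [hid]
        rw [LinearMap.toMatrix_comp b c.toBasis b, LinearMap.toMatrix_comp b c.toBasis c.toBasis]
      rw [hmat, cocPolyMat_eval A c d ξ (hA ξ hξ)]
      simp only [Matrix.mul_apply, Matrix.map_apply, map_sum, Finset.mul_sum, ← hN]
      refine Finset.sum_congr rfl fun p _ => Finset.sum_congr rfl fun q _ => ?_
      rw [MvPolynomial.eval_mul, MvPolynomial.eval_mul, MvPolynomial.eval_C,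
        MvPolynomial.eval_C]
  · intro ξ hξ
    exact cocSymbol_ker A ξ (hA ξ hξ)
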